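/- Suppose (x*, y*) ∈ ℝ^{d_x} × ℝ^{d_y} satisfies the first-order optimality conditions −∇_x F(x*, y*) ∈ ∂r(x*) and ∇_y F(x*, y*) ∈ ∂g(y*). Then the pair (z*, y*) with z* = −μ_x x* is the unique global minimizer of P over ℝ^{d_x} × ℝ^{d_y}, i.e., P(z*, y*) ≤ P(z, y) for all (z, y), with equality only when (z, y) = (z*, y*). -/

import Mathlib

open scoped RealInnerProductSpace

noncomputable section

/-- `p ∈ ∂h(x)` iff `h(x) < +∞` and `h(x') ≥ h(x) + ⟪p, x' − x⟫` for all `x'`. -/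
def SubdiffAt {E : Type*} [NormedAddCommGroup E] [InnerProductSpace ℝ E]
    (h : E → EReal) (x : E) : Set E :=
  {p | h x < ⊤ ∧ ∀ x' : E, h x + ((⟪p, x' - x⟫ : ℝ) : EReal) ≤ h x'}

/-- The pointwise conjugate `G(z, y) = sup_x [⟪x, z⟫ − r(x) − F̂(x, y) + g(y)]`. -/
def conjG {E F : Type*} [NormedAddCommGroup E] [InnerProductSpace ℝ E]
    [NormedAddCommGroup F] [InnerProductSpace ℝ F]
    (r : E → EReal) (g : F → EReal) (Fh : E → F → ℝ) (z : E) (y : F) : EReal :=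
  ⨆ x : E, (((⟪x, z⟫ : ℝ) : EReal) - r x - ((Fh x y : ℝ) : EReal) + g y)

/-- `P(z, y) = (1/(2μₓ))‖z‖² + (μ_y/2)‖y‖² + G(z, y)`. -/
def Pfun {E F : Type*} [NormedAddCommGroup E] [InnerProductSpace ℝ E]
    [NormedAddCommGroup F] [InnerProductSpace ℝ F]
    (μx μy : ℝ) (r : E → EReal) (g : F → EReal) (Fh : E → F → ℝ) (z : E) (y : F) : EReal :=
  ((1 / (2 * μx) * ‖z‖ ^ 2 + μy / 2 * ‖y‖ ^ 2 : ℝ) : EReal) + conjG r g Fh z y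

/-- Convexity for extended-real-valued functions. -/
def ERealConvexOn {E : Type*} [AddCommGroup E] [Module ℝ E] (f : E → EReal) : Prop :=
  ∀ x1 x2 : E, ∀ a b : ℝ, 0 ≤ a → 0 ≤ b → a + b = 1 →
    f (a • x1 + b • x2) ≤ (a : EReal) * f x1 + (b : EReal) * f x2

/-- Lemma `lem:solution` in the paper. If `(x*, y*)` satisfies the first-order
optimality conditions of the minimax problem, then `(z*, y*)` with `z* = −μₓ x*` is the unique
global minimizer of `P`. -/
theorem stmt_3 {dx dy : ℕ}
    (F : EuclideanSpace ℝ (Fin dx) → EuclideanSpace ℝ (Fin dy) → ℝ)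
    (gFx : EuclideanSpace ℝ (Fin dx) → EuclideanSpace ℝ (Fin dy) → EuclideanSpace ℝ (Fin dx))
    (gFy : EuclideanSpace ℝ (Fin dx) → EuclideanSpace ℝ (Fin dy) → EuclideanSpace ℝ (Fin dy))
    (μx μy : ℝ) (hμx : 0 < μx) (hμy : 0 < μy)
    (hgFx : ∀ x y, HasGradientAt (fun x' => F x' y) (gFx x y) x)
    (hgFy : ∀ x y, HasGradientAt (fun y' => F x y') (gFy x y) y)
    (hconv : ∀ x1 x2 y, F x2 y ≥ F x1 y + ⟪gFx x1 y, x2 - x1⟫ + μx / 2 * ‖x2 - x1‖ ^ 2)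
    (hconc : ∀ x y1 y2, F x y2 ≤ F x y1 + ⟪gFy x y1, y2 - y1⟫ - μy / 2 * ‖y2 - y1‖ ^ 2)
    (r : EuclideanSpace ℝ (Fin dx) → EReal) (g : EuclideanSpace ℝ (Fin dy) → EReal)
    (hrbot : ∀ x, r x ≠ ⊥) (hgbot : ∀ y, g y ≠ ⊥)
    (hrproper : ∃ x, r x ≠ ⊤) (hgproper : ∃ y, g y ≠ ⊤)
    (hrconv : ERealConvexOn r) (hgconv : ERealConvexOn g)
    (hrlsc : LowerSemicontinuous r) (hglsc : LowerSemicontinuous g)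
    (Fh : EuclideanSpace ℝ (Fin dx) → EuclideanSpace ℝ (Fin dy) → ℝ)
    (hFh : ∀ x y, Fh x y = F x y - μx / 2 * ‖x‖ ^ 2 + μy / 2 * ‖y‖ ^ 2)
    (xstar : EuclideanSpace ℝ (Fin dx)) (ystar : EuclideanSpace ℝ (Fin dy))
    (hoptx : -(gFx xstar ystar) ∈ SubdiffAt r xstar)
    (hopty : gFy xstar ystar ∈ SubdiffAt g ystar)
    (zstar : EuclideanSpace ℝ (Fin dx)) (hzstar : zstar = -(μx • xstar)) :
    (∀ (z : EuclideanSpace ℝ (Fin dx)) (y : EuclideanSpace ℝ (Fin dy)),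
        Pfun μx μy r g Fh zstar ystar ≤ Pfun μx μy r g Fh z y)
    ∧ ∀ (z : EuclideanSpace ℝ (Fin dx)) (y : EuclideanSpace ℝ (Fin dy)),
        Pfun μx μy r g Fh z y = Pfun μx μy r g Fh zstar ystar → z = zstar ∧ y = ystar := by
  obtain ⟨hrlt, hrsub⟩ := hoptx
  obtain ⟨hglt, hgsub⟩ := hopty
  obtain ⟨rs, hrs⟩ : ∃ a : ℝ, r xstar = (a : EReal) :=
    ⟨(r xstar).toReal, (EReal.coe_toReal hrlt.ne (hrbot xstar)).symm⟩
  obtain ⟨gs, hgs⟩ : ∃ a : ℝ, g ystar = (a : EReal) :=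
    ⟨(g ystar).toReal, (EReal.coe_toReal hglt.ne (hgbot ystar)).symm⟩
  set px := gFx xstar ystar with hpx
  set py := gFy xstar ystar with hpy
  -- real subgradient inequalities
  have hrsub' : ∀ x (ρ : ℝ), r x = (ρ : EReal) → rs + ⟪-px, x - xstar⟫ ≤ ρ := by
    intro x ρ hx
    have h := hrsub x
    rw [hrs, hx, ← EReal.coe_add, EReal.coe_le_coe_iff] at h
    exact h
  have hgsub' : ∀ y (γ : ℝ), g y = (γ : EReal) → gs + ⟪py, y - ystar⟫ ≤ γ := by
    intro y γ hy
    have h := hgsub y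
    rw [hgs, hy, ← EReal.coe_add, EReal.coe_le_coe_iff] at h
    exact h
  -- inner product facts from zstar = -(μx • xstar)
  have hzin : ∀ z : EuclideanSpace ℝ (Fin dx), ⟪xstar, z⟫ = -(⟪zstar, z⟫) / μx := by
    intro z
    rw [hzstar, inner_neg_left, real_inner_smul_left]
    field_simp
  have hzz : (⟪zstar, zstar⟫ : ℝ) = ‖zstar‖ ^ 2 := real_inner_self_eq_norm_sq zstar
  -- value of conjG at star is at most C
  set C : ℝ := ⟪xstar, zstar⟫ - rs - Fh xstar ystar + gs with hC
  have key1 : conjG r g Fh zstar ystar ≤ (C : EReal) := by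
    apply iSup_le
    intro x
    rw [hgs]
    rcases eq_or_ne (r x) ⊤ with hx | hx
    · rw [hx, EReal.sub_top, EReal.bot_sub, EReal.bot_add]
      exact bot_le
    · obtain ⟨ρ, hρ⟩ : ∃ a : ℝ, r x = (a : EReal) :=
        ⟨(r x).toReal, (EReal.coe_toReal hx (hrbot x)).symm⟩
      rw [hρ, ← EReal.coe_sub, ← EReal.coe_sub, ← EReal.coe_add, EReal.coe_le_coe_iff]
      have h1 := hrsub' x ρ hρ
      have h2 := hconv xstar x ystar
      have hns : ‖x - xstar‖ ^ 2 = ‖x‖ ^ 2 - 2 * ⟪x, xstar⟫ + ‖xstar‖ ^ 2 :=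
        norm_sub_sq_real x xstar
      have hin : ⟪x, zstar⟫ = -(μx * ⟪x, xstar⟫) := by
        rw [hzstar, inner_neg_right, real_inner_smul_right]
      have hin2 : ⟪xstar, zstar⟫ = -(μx * ‖xstar‖ ^ 2) := by
        rw [hzstar, inner_neg_right, real_inner_smul_right, real_inner_self_eq_norm_sq]
      have hinl : ⟪-px, x - xstar⟫ = -⟪px, x - xstar⟫ := inner_neg_left _ _
      simp only [hC, hFh]
      rw [hinl] at h1
      have hid : ⟪x, zstar⟫ + μx / 2 * ‖x‖ ^ 2 - ⟪xstar, zstar⟫ - μx / 2 * ‖xstar‖ ^ 2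
          = μx / 2 * ‖x - xstar‖ ^ 2 := by
        rw [hin, hin2, hns]; ring
      linarith [h1, h2, hid]
  -- lower bound on conjG at any point, taking x = xstar
  have key2 : ∀ (z : EuclideanSpace ℝ (Fin dx)) (y : EuclideanSpace ℝ (Fin dy)),
      ((⟪xstar, z⟫ - rs - Fh xstar y : ℝ) : EReal) + g y ≤ conjG r g Fh z y := by
    intro z y
    have h := le_iSup (fun x => ((⟪x, z⟫ : ℝ) : EReal) - r x - ((Fh x y : ℝ) : EReal) + g y) xstar
    simp only [hrs, ← EReal.coe_sub] at h
    exact h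
  set Pstar : ℝ := 1 / (2 * μx) * ‖zstar‖ ^ 2 + μy / 2 * ‖ystar‖ ^ 2 + C with hPstar
  -- quantitative lower bound
  have key3 : ∀ (z : EuclideanSpace ℝ (Fin dx)) (y : EuclideanSpace ℝ (Fin dy)),
      (Pstar : EReal) + ((1 / (2 * μx) * ‖z - zstar‖ ^ 2 + μy / 2 * ‖y - ystar‖ ^ 2 : ℝ) : EReal)
        ≤ Pfun μx μy r g Fh z y := by
    intro z y
    rcases eq_or_ne (g y) ⊤ with hy | hy
    · have htop : conjG r g Fh z y = ⊤ := by
        refine top_le_iff.mp ?_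
        have h := key2 z y
        rwa [hy, EReal.add_top_of_ne_bot (EReal.coe_ne_bot _)] at h
      rw [Pfun, htop, EReal.add_top_of_ne_bot (EReal.coe_ne_bot _)]
      exact le_top
    · obtain ⟨γ, hγ⟩ : ∃ a : ℝ, g y = (a : EReal) :=
        ⟨(g y).toReal, (EReal.coe_toReal hy (hgbot y)).symm⟩
      have h := key2 z y
      rw [hγ, ← EReal.coe_add] at h
      refine le_trans ?_ (le_trans (add_le_add_right h _) (le_of_eq rfl))
      rw [← EReal.coe_add, ← EReal.coe_add, EReal.coe_le_coe_iff]
      -- real inequality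
      have h1 := hgsub' y γ hγ
      have h2 := hconc xstar ystar y
      have hnsy : ‖y - ystar‖ ^ 2 = ‖y‖ ^ 2 - 2 * ⟪y, ystar⟫ + ‖ystar‖ ^ 2 :=
        norm_sub_sq_real y ystar
      have hnsz : ‖z - zstar‖ ^ 2 = ‖z‖ ^ 2 - 2 * ⟪z, zstar⟫ + ‖zstar‖ ^ 2 :=
        norm_sub_sq_real z zstar
      have hyin : (⟪y, ystar⟫ : ℝ) = ⟪ystar, y⟫ := real_inner_comm ystar y
      have hiz := hzin z
      have hiz2 := hzin zstar
      have hzc : (⟪z, zstar⟫ : ℝ) = ⟪zstar, z⟫ := real_inner_comm zstar z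
      simp only [hPstar, hC, hFh]
      have hinsy : (⟪py, y - ystar⟫ : ℝ) = ⟪py, y⟫ - ⟪py, ystar⟫ := inner_sub_right py y ystar
      have hμx' : μx ≠ 0 := ne_of_gt hμx
      -- the z-part identity
      have hzid : 1 / (2 * μx) * ‖z‖ ^ 2 + ⟪xstar, z⟫
          - (1 / (2 * μx) * ‖zstar‖ ^ 2 + ⟪xstar, zstar⟫)
          = 1 / (2 * μx) * ‖z - zstar‖ ^ 2 := by
        rw [hnsz, hiz, hiz2, hzz, hzc]
        field_simp
        ring
      linarith [h1, h2, hzid]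
  have hQ0 : (1 / (2 * μx) * ‖zstar - zstar‖ ^ 2 + μy / 2 * ‖ystar - ystar‖ ^ 2 : ℝ) = 0 := by
    simp
  have hPle : Pfun μx μy r g Fh zstar ystar ≤ (Pstar : EReal) := by
    rw [Pfun, hPstar]
    calc ((1 / (2 * μx) * ‖zstar‖ ^ 2 + μy / 2 * ‖ystar‖ ^ 2 : ℝ) : EReal) + conjG r g Fh zstar ystar
        ≤ ((1 / (2 * μx) * ‖zstar‖ ^ 2 + μy / 2 * ‖ystar‖ ^ 2 : ℝ) : EReal) + (C : EReal) :=
          add_le_add_right key1 _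
      _ = _ := by rw [← EReal.coe_add]
  have hPge : (Pstar : EReal) ≤ Pfun μx μy r g Fh zstar ystar := by
    have h := key3 zstar ystar
    rwa [hQ0, EReal.coe_zero, add_zero] at h
  have hPeq : Pfun μx μy r g Fh zstar ystar = (Pstar : EReal) := le_antisymm hPle hPge
  constructor
  · intro z y
    rw [hPeq]
    refine le_trans ?_ (key3 z y)
    rw [← EReal.coe_add]
    rw [EReal.coe_le_coe_iff]
    have : 0 ≤ 1 / (2 * μx) * ‖z - zstar‖ ^ 2 + μy / 2 * ‖y - ystar‖ ^ 2 := by positivity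
    linarith
  · intro z y heq
    rw [hPeq] at heq
    have h := key3 z y
    rw [heq, ← EReal.coe_add, EReal.coe_le_coe_iff] at h
    have ha : (0:ℝ) < 1 / (2 * μx) := by positivity
    have hb : (0:ℝ) < μy / 2 := by positivity
    have hz0 : ‖z - zstar‖ ^ 2 = 0 ∧ ‖y - ystar‖ ^ 2 = 0 := by
      constructor
      · refine le_antisymm ?_ (sq_nonneg _)
        nlinarith [sq_nonneg ‖y - ystar‖, mul_nonneg hb.le (sq_nonneg ‖y - ystar‖), ha]
      · refine le_antisymm ?_ (sq_nonneg _)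
        nlinarith [sq_nonneg ‖z - zstar‖, mul_nonneg ha.le (sq_nonneg ‖z - zstar‖), hb]
    constructor
    · have := hz0.1
      rw [pow_eq_zero_iff (by norm_num), norm_eq_zero, sub_eq_zero] at this
      exact this
    · have := hz0.2
      rw [pow_eq_zero_iff (by norm_num), norm_eq_zero, sub_eq_zero] at this
      exact this
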